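/- If a sequence (T_j) of tournaments with n_j = |V(T_j)| → ∞ satisfies (1/n_j²) · Σ_{(u,v) arc of T_j} |C(u,v)/(n_j − 2) − 1/4| → 0, then p(Tr₄, T_j) + p(R₄, T_j) → 3/4 as j → ∞. -/

import Mathlib

/-- A tournament on `n` vertices: an irreflexive relation such that for every
pair of distinct vertices exactly one direction holds. -/
structure Tournament (n : ℕ) where
  rel : Fin n → Fin n → Bool
  irrefl : ∀ v, rel v v = false
  total : ∀ u v, u ≠ v → rel u v = !rel v u

/-- The transitive tournament `Tr_k`. -/
def Tr (k : ℕ) : Tournament k where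
  rel i j := decide (i < j)
  irrefl v := by simp
  total u v h := by
    rcases lt_or_gt_of_ne h with h' | h'
    · simp [h', lt_asymm h']
    · simp [h', lt_asymm h']

/-- The cyclic triangle. -/
def C3 : Tournament 3 where
  rel := ![![false, true, false], ![false, false, true], ![true, false, false]]
  irrefl := by decide
  total := by decide

/-- `W₄`: the non-transitive tournament on 4 vertices with a "winner". -/
def W4 : Tournament 4 where
  rel := ![![false, true, true, true], ![false, false, true, false],
           ![false, false, false, true], ![false, true, false, false]]
  irrefl := by decide
  total := by decide

/-- `L₄`: the non-transitive tournament on 4 vertices with a "loser". -/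
def L4 : Tournament 4 where
  rel := ![![false, true, false, true], ![false, false, true, true],
           ![true, false, false, true], ![false, false, false, false]]
  irrefl := by decide
  total := by decide

/-- `R₄`: the tournament on 4 vertices with out-degree sequence (1,1,2,2). -/
def R4 : Tournament 4 where
  rel := ![![false, true, true, false], ![false, false, true, true],
           ![false, false, false, true], ![true, false, false, false]]
  irrefl := by decide
  total := by decide

/-- Two tournaments on the same number of vertices are isomorphic if some
permutation of the vertices carries one arc relation to the other. -/
def Isomorphic {k : ℕ} (S T : Tournament k) : Prop :=
  ∃ e : Equiv.Perm (Fin k), ∀ i j, S.rel i j = T.rel (e i) (e j)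

/-- The subtournament of `T` induced on the subset `A` is isomorphic to `S`. -/
def IsoOn {k n : ℕ} (S : Tournament k) (T : Tournament n) (A : Finset (Fin n)) : Prop :=
  ∃ f : Fin k → Fin n, Function.Injective f ∧ Finset.univ.image f = A ∧
    ∀ i j, S.rel i j = T.rel (f i) (f j)

open scoped Classical in
/-- The number of `k`-element subsets of the vertex set of `T` whose induced
subtournament is isomorphic to `S` (where `S` has `k` vertices). -/
noncomputable def copyCount {k n : ℕ} (S : Tournament k) (T : Tournament n) : ℕ :=
  ((Finset.powersetCard k (Finset.univ : Finset (Fin n))).filter (IsoOn S T)).card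

/-- The (unlabelled) density `p(S, T)`. -/
noncomputable def density {k n : ℕ} (S : Tournament k) (T : Tournament n) : ℝ :=
  (copyCount S T : ℝ) / (n.choose k : ℝ)

/-- The number of automorphisms of a tournament. -/
def autCount {k : ℕ} (S : Tournament k) : ℕ :=
  (Finset.univ.filter
    (fun e : Equiv.Perm (Fin k) => ∀ i j, S.rel i j = S.rel (e i) (e j))).card

/-- A sequence of tournaments with growing vertex sets is quasi-random if every
fixed tournament `S` on `k` vertices appears with density tending to
`k! / (|Aut S| * 2^(k(k-1)/2))`. -/
def QuasiRandom {nn : ℕ → ℕ} (T : ∀ j, Tournament (nn j)) : Prop :=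
  ∀ (k : ℕ) (S : Tournament k),
    Filter.Tendsto (fun j => density S (T j)) Filter.atTop
      (nhds ((k.factorial : ℝ) / ((autCount S : ℝ) * 2 ^ (k * (k - 1) / 2))))

/-- `D(u,v) = #{w : u→w ∧ w→v}`. -/
def Dcount {n : ℕ} (T : Tournament n) (u v : Fin n) : ℕ :=
  (Finset.univ.filter (fun w => T.rel u w ∧ T.rel w v)).card

/-- `C(u,v) = #{w : v→w ∧ w→u}`. -/
def Ccount {n : ℕ} (T : Tournament n) (u v : Fin n) : ℕ :=
  (Finset.univ.filter (fun w => T.rel v w ∧ T.rel w u)).card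

/-- `I(u,v) = #{w : w→u ∧ w→v}`. -/
def Icount {n : ℕ} (T : Tournament n) (u v : Fin n) : ℕ :=
  (Finset.univ.filter (fun w => T.rel w u ∧ T.rel w v)).card

/-- `O(u,v) = #{w : u→w ∧ v→w}`. -/
def Ocount {n : ℕ} (T : Tournament n) (u v : Fin n) : ℕ :=
  (Finset.univ.filter (fun w => T.rel u w ∧ T.rel v w)).card

/-- The subset `A` induces a transitive subtournament of `T`. -/
def IsTransOn {n : ℕ} (T : Tournament n) (A : Finset (Fin n)) : Prop :=
  ∀ u ∈ A, ∀ v ∈ A, ∀ w ∈ A, T.rel u v → T.rel v w → T.rel u w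

open scoped Classical in
/-- `tr_m(T)`: the number of `m`-element subsets of the vertex set of `T`
inducing a transitive subtournament. -/
noncomputable def trCount (m : ℕ) {n : ℕ} (T : Tournament n) : ℕ :=
  ((Finset.powersetCard m (Finset.univ : Finset (Fin n))).filter (IsTransOn T)).card

/-- The subtournament of `T` induced on a subset `A` of its vertices. -/
noncomputable def induce {n : ℕ} (T : Tournament n) (A : Finset (Fin n)) :
    Tournament A.card where
  rel i j := T.rel (A.orderIsoOfFin rfl i) (A.orderIsoOfFin rfl j)
  irrefl i := T.irrefl _
  total i j h := T.total _ _ (fun hc => h ((A.orderIsoOfFin rfl).injective (Subtype.ext hc)))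

/-- The out-neighbourhood `N⁺(u)` of a vertex. -/
def outSet {n : ℕ} (T : Tournament n) (u : Fin n) : Finset (Fin n) :=
  Finset.univ.filter (fun w => T.rel u w)

/-- The out-degree of a vertex. -/
def outDeg {n : ℕ} (T : Tournament n) (v : Fin n) : ℕ :=
  (Finset.univ.filter (fun w => T.rel v w)).card

/-- The multiset of out-degrees of a tournament. -/
def outDegs {n : ℕ} (T : Tournament n) : Multiset ℕ :=
  Finset.univ.val.map (outDeg T)

/-- The arc relation of `T` is transitive. -/
def IsTransitiveT {k : ℕ} (S : Tournament k) : Prop :=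
  ∀ u v w, S.rel u v → S.rel v w → S.rel u w


namespace Stmt16

def cycOrd (n : ℕ) (r : Fin n → Fin n → Bool) : ℕ :=
  ∑ u, ∑ v, ∑ w, if r u v ∧ r v w ∧ r w u then 1 else 0

def sqOrd (n : ℕ) (r : Fin n → Fin n → Bool) : ℕ :=
  ∑ u, ∑ v, ∑ w, ∑ x, if r u v ∧ r v w ∧ r w u ∧ r v x ∧ r x u ∧ w ≠ x then 1 else 0

def iso' (s r : Fin 4 → Fin 4 → Bool) : Prop :=
  ∃ e : Equiv.Perm (Fin 4), ∀ i j, s i j = r (e i) (e j)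

instance (s r : Fin 4 → Fin 4 → Bool) : Decidable (iso' s r) := by
  unfold iso'; infer_instance

def pIdx : Fin 4 → Fin 4 → Fin 6 :=
  ![![0,0,1,2], ![0,0,3,4], ![1,3,0,5], ![2,4,5,0]]

def fIdx : Fin 6 → Fin 4 := ![0,0,0,1,1,2]
def sIdx : Fin 6 → Fin 4 := ![1,2,3,2,3,3]

def mkr (b : Fin 6 → Bool) : Fin 4 → Fin 4 → Bool :=
  fun i j => if i < j then b (pIdx i j) else if j < i then !(b (pIdx i j)) else false

set_option maxHeartbeats 4000000 in
theorem Kb : ∀ b : Fin 6 → Bool,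
    (if iso' (Tr 4).rel (mkr b) then 3 else 0) + (if iso' R4.rel (mkr b) then 3 else 0)
      + cycOrd 4 (mkr b) = 3 + 3 * sqOrd 4 (mkr b) := by decide

theorem pIdx_spec : ∀ i j : Fin 4, i < j →
    fIdx (pIdx i j) = i ∧ sIdx (pIdx i j) = j ∧ pIdx j i = pIdx i j := by decide

theorem repr_mkr (r : Fin 4 → Fin 4 → Bool) (h1 : ∀ v, r v v = false)
    (h2 : ∀ u v, u ≠ v → r u v = !r v u) :
    r = mkr (fun k => r (fIdx k) (sIdx k)) := by
  funext i j
  rcases lt_trichotomy i j with hij | hij | hij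
  · obtain ⟨e1, e2, _⟩ := pIdx_spec i j hij
    simp [mkr, hij, e1, e2]
  · subst hij; simp [mkr, h1]
  · obtain ⟨e1, e2, e3⟩ := pIdx_spec j i hij
    have : ¬ i < j := not_lt_of_gt hij
    simp only [mkr, this, if_false, hij, if_true, e3, e1, e2]
    rw [h2 i j (ne_of_gt hij)]

theorem K (r : Fin 4 → Fin 4 → Bool) (h1 : ∀ v, r v v = false)
    (h2 : ∀ u v, u ≠ v → r u v = !r v u) :
    (if iso' (Tr 4).rel r then 3 else 0) + (if iso' R4.rel r then 3 else 0)
      + cycOrd 4 r = 3 + 3 * sqOrd 4 r := by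
  have := Kb (fun k => r (fIdx k) (sIdx k))
  rwa [← repr_mkr r h1 h2] at this

end Stmt16
namespace Stmt16

variable {n : ℕ}

def pullRel (T : Tournament n) (A : Finset (Fin n)) (h : A.card = 4) :
    Fin 4 → Fin 4 → Bool :=
  fun i j => T.rel (A.orderIsoOfFin h i) (A.orderIsoOfFin h j)

theorem pull_irrefl (T : Tournament n) (A : Finset (Fin n)) (h : A.card = 4) :
    ∀ v, pullRel T A h v v = false := fun v => T.irrefl _

theorem pull_total (T : Tournament n) (A : Finset (Fin n)) (h : A.card = 4) :
    ∀ u v, u ≠ v → pullRel T A h u v = !pullRel T A h v u := by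
  intro u v huv
  exact T.total _ _ (fun hc => huv ((A.orderIsoOfFin h).injective (Subtype.ext hc)))

theorem isoOn_iff (S : Tournament 4) (T : Tournament n) (A : Finset (Fin n))
    (h : A.card = 4) : IsoOn S T A ↔ iso' S.rel (pullRel T A h) := by
  constructor
  · rintro ⟨f, hinj, himg, hrel⟩
    have hmem : ∀ i, f i ∈ A := by
      intro i; rw [← himg]; exact Finset.mem_image_of_mem f (Finset.mem_univ i)
    set e0 : Fin 4 → Fin 4 := fun i => (A.orderIsoOfFin h).symm ⟨f i, hmem i⟩ with he0
    have he0inj : Function.Injective e0 := by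
      intro i j hij
      have h2 : (⟨f i, hmem i⟩ : {x // x ∈ A}) = ⟨f j, hmem j⟩ := by
        have := congrArg (A.orderIsoOfFin h) hij
        simpa [he0] using this
      exact hinj (congrArg Subtype.val h2)
    refine ⟨Equiv.ofBijective e0 (Finite.injective_iff_bijective.mp he0inj), ?_⟩
    intro i j
    rw [hrel i j]
    have hv : ∀ i, ((A.orderIsoOfFin h) (e0 i) : Fin n) = f i := by
      intro i; rw [he0]; simp
    simp only [Equiv.ofBijective_apply, pullRel, hv]
  · rintro ⟨e, he⟩
    refine ⟨fun i => (A.orderIsoOfFin h (e i) : Fin n), ?_, ?_, he⟩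
    · intro i j hij
      exact e.injective ((A.orderIsoOfFin h).injective (Subtype.ext hij))
    · ext x
      simp only [Finset.mem_image, Finset.mem_univ, true_and]
      constructor
      · rintro ⟨i, rfl⟩; exact ((A.orderIsoOfFin h) (e i)).2
      · intro hx
        obtain ⟨i, hi⟩ := (A.orderIsoOfFin h).surjective ⟨x, hx⟩
        exact ⟨e.symm i, by simp [hi]⟩

theorem sum_over {M : Type*} [AddCommMonoid M] (A : Finset (Fin n)) (h : A.card = 4)
    (f : Fin n → M) : ∑ u ∈ A, f u = ∑ i : Fin 4, f (A.orderIsoOfFin h i) := by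
  rw [← Finset.sum_attach A f]
  exact (Fintype.sum_equiv (A.orderIsoOfFin h).toEquiv _ _ (fun i => rfl)).symm

end Stmt16
namespace Stmt16

variable {n : ℕ}

theorem ite_ite {p q : Prop} [Decidable p] [Decidable q] (a : ℕ) :
    (if p then (if q then a else 0) else 0) = if p ∧ q then a else 0 := by
  split_ifs <;> simp_all

theorem ne_of_rel (T : Tournament n) {u v : Fin n} (h : T.rel u v) : u ≠ v := by
  rintro rfl
  rw [T.irrefl] at h
  exact absurd h (by simp)

def tA (T : Tournament n) (A : Finset (Fin n)) : ℕ :=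
  ∑ u ∈ A, ∑ v ∈ A, ∑ w ∈ A, if T.rel u v ∧ T.rel v w ∧ T.rel w u then 1 else 0

def sA (T : Tournament n) (A : Finset (Fin n)) : ℕ :=
  ∑ u ∈ A, ∑ v ∈ A, ∑ w ∈ A, ∑ x ∈ A,
    if T.rel u v ∧ T.rel v w ∧ T.rel w u ∧ T.rel v x ∧ T.rel x u ∧ w ≠ x then 1 else 0

theorem tA_eq (T : Tournament n) (A : Finset (Fin n)) (h : A.card = 4) :
    tA T A = cycOrd 4 (pullRel T A h) := by
  unfold tA cycOrd pullRel
  rw [sum_over A h]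
  refine Finset.sum_congr rfl fun u _ => ?_
  rw [sum_over A h]
  refine Finset.sum_congr rfl fun v _ => ?_
  rw [sum_over A h]

theorem sA_eq (T : Tournament n) (A : Finset (Fin n)) (h : A.card = 4) :
    sA T A = sqOrd 4 (pullRel T A h) := by
  unfold sA sqOrd pullRel
  rw [sum_over A h]
  refine Finset.sum_congr rfl fun u _ => ?_
  rw [sum_over A h]
  refine Finset.sum_congr rfl fun v _ => ?_
  rw [sum_over A h]
  refine Finset.sum_congr rfl fun w _ => ?_
  rw [sum_over A h]
  refine Finset.sum_congr rfl fun x _ => ?_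
  refine if_congr ?_ rfl rfl
  have hinj : ((A.orderIsoOfFin h w : Fin n) ≠ (A.orderIsoOfFin h x : Fin n)) ↔ w ≠ x := by
    constructor
    · intro hne hwx; exact hne (by rw [hwx])
    · intro hwx hval
      exact hwx ((A.orderIsoOfFin h).injective (Subtype.ext hval))
  tauto

open scoped Classical in
theorem perA (T : Tournament n) (A : Finset (Fin n)) (hA : A.card = 4) :
    (if IsoOn (Tr 4) T A then 3 else 0) + (if IsoOn R4 T A then 3 else 0) + tA T A
      = 3 + 3 * sA T A := by
  rw [if_congr (isoOn_iff (Tr 4) T A hA) rfl rfl, if_congr (isoOn_iff R4 T A hA) rfl rfl,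
    tA_eq T A hA, sA_eq T A hA]
  exact K _ (pull_irrefl T A hA) (pull_total T A hA)

theorem card_contain3 {u v w : Fin n} (huv : u ≠ v) (huw : u ≠ w) (hvw : v ≠ w) :
    ((Finset.powersetCard 4 (Finset.univ : Finset (Fin n))).filter
      (fun A => u ∈ A ∧ v ∈ A ∧ w ∈ A)).card = n - 3 := by
  classical
  set s : Finset (Fin n) := {u, v, w} with hs
  have hcs : s.card = 3 := Finset.card_eq_three.mpr ⟨u, v, w, huv, huw, hvw, rfl⟩
  have hcond : ∀ A : Finset (Fin n), (u ∈ A ∧ v ∈ A ∧ w ∈ A) ↔ s ⊆ A := by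
    intro A
    simp [hs, Finset.insert_subset_iff, Finset.singleton_subset_iff]
  have htarget : (Finset.univ \ s).card = n - 3 := by
    rw [Finset.card_sdiff_of_subset (Finset.subset_univ s), Finset.card_univ, Fintype.card_fin, hcs]
  rw [← htarget]
  have hmemf : ∀ A, A ∈ (Finset.powersetCard 4 (Finset.univ : Finset (Fin n))).filter
      (fun A => u ∈ A ∧ v ∈ A ∧ w ∈ A) ↔ (A.card = 4 ∧ s ⊆ A) := by
    intro A
    rw [Finset.mem_filter, Finset.mem_powersetCard_univ, hcond]
  have hne : ∀ A (hA : A.card = 4 ∧ s ⊆ A), (A \ s).Nonempty := by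
    intro A hA
    rw [← Finset.card_pos, Finset.card_sdiff_of_subset hA.2, hA.1, hcs]
    norm_num
  refine Finset.card_bij' (fun A hA => (A \ s).min' (hne A ((hmemf A).mp hA)))
    (fun x _ => insert x s) ?_ ?_ ?_ ?_
  · intro A hA
    have hm := Finset.min'_mem (A \ s) (hne A ((hmemf A).mp hA))
    rw [Finset.mem_sdiff] at hm
    rw [Finset.mem_sdiff]
    exact ⟨Finset.mem_univ _, hm.2⟩
  · intro x hx
    rw [Finset.mem_sdiff] at hx
    rw [hmemf]
    constructor
    · rw [Finset.card_insert_of_notMem hx.2, hcs]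
    · exact Finset.subset_insert x s
  · intro A hA
    obtain ⟨hA4, hsub⟩ := (hmemf A).mp hA
    have hne' := hne A ⟨hA4, hsub⟩
    have hcard1 : (A \ s).card = 1 := by
      rw [Finset.card_sdiff_of_subset hsub, hA4, hcs]
    obtain ⟨a, ha⟩ := Finset.card_eq_one.mp hcard1
    have hm : (A \ s).min' hne' = a :=
      (Finset.eq_singleton_iff_unique_mem.mp ha).2 _ (Finset.min'_mem _ _)
    show insert ((A \ s).min' hne') s = A
    rw [hm, Finset.insert_eq, ← ha, Finset.sdiff_union_of_subset hsub]
  · intro x hx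
    rw [Finset.mem_sdiff] at hx
    have hsing : insert x s \ s = {x} := by
      ext y
      simp only [Finset.mem_sdiff, Finset.mem_insert, Finset.mem_singleton]
      constructor
      · rintro ⟨hy1 | hy1, hy2⟩
        · exact hy1
        · exact absurd hy1 hy2
      · rintro rfl; exact ⟨Or.inl rfl, hx.2⟩
    exact (Finset.eq_singleton_iff_unique_mem.mp hsing).2 _ (Finset.min'_mem _ _)

theorem card_contain4 {u v w x : Fin n} (huv : u ≠ v) (huw : u ≠ w) (hux : u ≠ x)
    (hvw : v ≠ w) (hvx : v ≠ x) (hwx : w ≠ x) :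
    ((Finset.powersetCard 4 (Finset.univ : Finset (Fin n))).filter
      (fun A => u ∈ A ∧ v ∈ A ∧ w ∈ A ∧ x ∈ A)).card = 1 := by
  classical
  set s : Finset (Fin n) := {u, v, w, x} with hs
  have hcs : s.card = 4 := by
    rw [hs]
    rw [Finset.card_insert_of_notMem (by
      simp only [Finset.mem_insert, Finset.mem_singleton]; push_neg
      exact ⟨huv, huw, hux⟩),
      Finset.card_insert_of_notMem (by
      simp only [Finset.mem_insert, Finset.mem_singleton]; push_neg
      exact ⟨hvw, hvx⟩),
      Finset.card_insert_of_notMem (by simp only [Finset.mem_singleton]; exact hwx),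
      Finset.card_singleton]
  have : (Finset.powersetCard 4 (Finset.univ : Finset (Fin n))).filter
      (fun A => u ∈ A ∧ v ∈ A ∧ w ∈ A ∧ x ∈ A) = {s} := by
    ext A
    rw [Finset.mem_filter, Finset.mem_powersetCard_univ, Finset.mem_singleton]
    constructor
    · rintro ⟨hA4, h1, h2, h3, h4⟩
      have hsub : s ⊆ A := by
        rw [hs]
        intro y hy
        simp only [Finset.mem_insert, Finset.mem_singleton] at hy
        rcases hy with rfl | rfl | rfl | rfl <;> assumption
      exact (Finset.eq_of_subset_of_card_le hsub (by rw [hA4, hcs])).symm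
    · rintro rfl
      refine ⟨hcs, ?_, ?_, ?_, ?_⟩ <;> simp [hs]
  rw [this, Finset.card_singleton]

end Stmt16
namespace Stmt16

variable {n : ℕ}

def TnN (T : Tournament n) : ℕ := ∑ u, ∑ v, if T.rel u v then Ccount T u v else 0

def SnN (T : Tournament n) : ℕ :=
  ∑ u, ∑ v, if T.rel u v then Ccount T u v * (Ccount T u v - 1) else 0

theorem cycOrd_eq_Tn (T : Tournament n) : cycOrd n T.rel = TnN T := by
  unfold cycOrd TnN
  refine Finset.sum_congr rfl fun u _ => Finset.sum_congr rfl fun v _ => ?_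
  by_cases hr : (T.rel u v : Prop)
  · simp only [hr, true_and, if_true]
    rw [Ccount, Finset.card_filter]
  · simp [hr]

theorem pair_count (P : Fin n → Prop) [DecidablePred P] :
    (∑ w, ∑ x, if P w ∧ P x ∧ w ≠ x then 1 else 0)
      = (Finset.univ.filter P).card * ((Finset.univ.filter P).card - 1) := by
  have step1 : ∀ w, (∑ x, if P w ∧ P x ∧ w ≠ x then 1 else 0)
      = if P w then ((Finset.univ.filter P).card - 1) else 0 := by
    intro w
    by_cases hw : P w
    · simp only [hw, true_and, if_true]
      have hfe : Finset.univ.filter (fun x => P x ∧ w ≠ x) = (Finset.univ.filter P).erase w := by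
        ext y
        simp only [Finset.mem_filter, Finset.mem_erase, Finset.mem_univ, true_and]
        exact ⟨fun h => ⟨Ne.symm h.2, h.1⟩, fun h => ⟨h.2, Ne.symm h.1⟩⟩
      calc (∑ x, if P x ∧ w ≠ x then (1:ℕ) else 0)
          = (Finset.univ.filter (fun x => P x ∧ w ≠ x)).card := (Finset.card_filter _ _).symm
        _ = ((Finset.univ.filter P).erase w).card := by rw [hfe]
        _ = (Finset.univ.filter P).card - 1 :=
            Finset.card_erase_of_mem (Finset.mem_filter.mpr ⟨Finset.mem_univ w, hw⟩)
    · simp [hw]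
  rw [Finset.sum_congr rfl fun w _ => step1 w, ← Finset.sum_filter, Finset.sum_const,
    smul_eq_mul]

theorem sqOrd_eq_Sn (T : Tournament n) : sqOrd n T.rel = SnN T := by
  unfold sqOrd SnN
  refine Finset.sum_congr rfl fun u _ => Finset.sum_congr rfl fun v _ => ?_
  by_cases hr : (T.rel u v : Prop)
  · simp only [hr, true_and, if_true]
    have hiff : ∀ w x : Fin n,
        (T.rel v w ∧ T.rel w u ∧ T.rel v x ∧ T.rel x u ∧ w ≠ x)
          ↔ ((T.rel v w ∧ T.rel w u) ∧ (T.rel v x ∧ T.rel x u) ∧ w ≠ x) := by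
      intro w x; tauto
    rw [Finset.sum_congr rfl fun w _ => Finset.sum_congr rfl fun x _ =>
      if_congr (hiff w x) rfl rfl]
    rw [pair_count (fun w => (T.rel v w ∧ T.rel w u : Prop))]
    rfl
  · simp [hr]

open scoped Classical in
theorem sum_tA (T : Tournament n) :
    ∑ A ∈ Finset.powersetCard 4 (Finset.univ : Finset (Fin n)), tA T A
      = (n - 3) * TnN T := by
  have l1 : ∀ (A : Finset (Fin n)) (f : Fin n → ℕ),
      ∑ u ∈ A, f u = ∑ u, if u ∈ A then f u else 0 := by
    intro A f; rw [Finset.sum_ite_mem, Finset.univ_inter]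
  have expand : ∀ A : Finset (Fin n), tA T A = ∑ u, ∑ v, ∑ w,
      if (T.rel u v ∧ T.rel v w ∧ T.rel w u) ∧ (u ∈ A ∧ v ∈ A ∧ w ∈ A) then 1 else 0 := by
    intro A
    unfold tA
    rw [l1]
    refine Finset.sum_congr rfl fun u _ => ?_
    by_cases hu : u ∈ A
    · simp only [hu, if_true, true_and, and_true]
      rw [l1]
      refine Finset.sum_congr rfl fun v _ => ?_
      by_cases hv : v ∈ A
      · simp only [hv, if_true, true_and, and_true]
        rw [l1]
        refine Finset.sum_congr rfl fun w _ => ?_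
        by_cases hw : w ∈ A <;> simp [hw]
      · simp [hv]
    · simp [hu]
  have inner : ∀ u v w : Fin n,
      (∑ A ∈ Finset.powersetCard 4 (Finset.univ : Finset (Fin n)),
        if (T.rel u v ∧ T.rel v w ∧ T.rel w u) ∧ (u ∈ A ∧ v ∈ A ∧ w ∈ A) then 1 else 0)
      = if (T.rel u v ∧ T.rel v w ∧ T.rel w u : Prop) then (n - 3) else 0 := by
    intro u v w
    by_cases hc : (T.rel u v ∧ T.rel v w ∧ T.rel w u : Prop)
    · rw [Finset.sum_congr rfl fun A _ => if_congr (and_iff_right hc) rfl rfl,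
        ← Finset.card_filter, if_pos hc]
      exact card_contain3 (ne_of_rel T hc.1) (Ne.symm (ne_of_rel T hc.2.2))
        (ne_of_rel T hc.2.1)
    · rw [if_neg hc]
      exact Finset.sum_eq_zero fun A _ => by rw [if_neg (fun hh => hc hh.1)]
  calc ∑ A ∈ Finset.powersetCard 4 (Finset.univ : Finset (Fin n)), tA T A
      = ∑ A ∈ Finset.powersetCard 4 (Finset.univ : Finset (Fin n)), ∑ u, ∑ v, ∑ w,
        if (T.rel u v ∧ T.rel v w ∧ T.rel w u) ∧ (u ∈ A ∧ v ∈ A ∧ w ∈ A) then 1 else 0 :=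
        Finset.sum_congr rfl fun A _ => expand A
    _ = ∑ u, ∑ v, ∑ w,
        ∑ A ∈ Finset.powersetCard 4 (Finset.univ : Finset (Fin n)),
        (if (T.rel u v ∧ T.rel v w ∧ T.rel w u) ∧ (u ∈ A ∧ v ∈ A ∧ w ∈ A) then 1 else 0) := by
        rw [Finset.sum_comm]
        refine Finset.sum_congr rfl fun u _ => ?_
        rw [Finset.sum_comm]
        refine Finset.sum_congr rfl fun v _ => ?_
        rw [Finset.sum_comm]
    _ = ∑ u, ∑ v, ∑ w, (if (T.rel u v ∧ T.rel v w ∧ T.rel w u : Prop) then (n - 3) else 0) :=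
        Finset.sum_congr rfl fun u _ => Finset.sum_congr rfl fun v _ =>
          Finset.sum_congr rfl fun w _ => inner u v w
    _ = (n - 3) * cycOrd n T.rel := by
        unfold cycOrd
        rw [Finset.mul_sum]
        refine Finset.sum_congr rfl fun u _ => ?_
        rw [Finset.mul_sum]
        refine Finset.sum_congr rfl fun v _ => ?_
        rw [Finset.mul_sum]
        exact Finset.sum_congr rfl fun w _ => by rw [mul_ite, mul_one, mul_zero]
    _ = (n - 3) * TnN T := by rw [cycOrd_eq_Tn]

open scoped Classical in
theorem sum_sA (T : Tournament n) :
    ∑ A ∈ Finset.powersetCard 4 (Finset.univ : Finset (Fin n)), sA T A = SnN T := by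
  have l1 : ∀ (A : Finset (Fin n)) (f : Fin n → ℕ),
      ∑ u ∈ A, f u = ∑ u, if u ∈ A then f u else 0 := by
    intro A f; rw [Finset.sum_ite_mem, Finset.univ_inter]
  have expand : ∀ A : Finset (Fin n), sA T A = ∑ u, ∑ v, ∑ w, ∑ x,
      if (T.rel u v ∧ T.rel v w ∧ T.rel w u ∧ T.rel v x ∧ T.rel x u ∧ w ≠ x)
        ∧ (u ∈ A ∧ v ∈ A ∧ w ∈ A ∧ x ∈ A) then 1 else 0 := by
    intro A
    unfold sA
    rw [l1]
    refine Finset.sum_congr rfl fun u _ => ?_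
    by_cases hu : u ∈ A
    · simp only [hu, if_true, true_and, and_true]
      rw [l1]
      refine Finset.sum_congr rfl fun v _ => ?_
      by_cases hv : v ∈ A
      · simp only [hv, if_true, true_and, and_true]
        rw [l1]
        refine Finset.sum_congr rfl fun w _ => ?_
        by_cases hw : w ∈ A
        · simp only [hw, if_true, true_and, and_true]
          rw [l1]
          refine Finset.sum_congr rfl fun x _ => ?_
          by_cases hx : x ∈ A <;> simp [hx]
        · simp [hw]
      · simp [hv]
    · simp [hu]
  have inner : ∀ u v w x : Fin n,
      (∑ A ∈ Finset.powersetCard 4 (Finset.univ : Finset (Fin n)),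
        if (T.rel u v ∧ T.rel v w ∧ T.rel w u ∧ T.rel v x ∧ T.rel x u ∧ w ≠ x)
          ∧ (u ∈ A ∧ v ∈ A ∧ w ∈ A ∧ x ∈ A) then 1 else 0)
      = if (T.rel u v ∧ T.rel v w ∧ T.rel w u ∧ T.rel v x ∧ T.rel x u ∧ w ≠ x : Prop)
          then 1 else 0 := by
    intro u v w x
    by_cases hc : (T.rel u v ∧ T.rel v w ∧ T.rel w u ∧ T.rel v x ∧ T.rel x u ∧ w ≠ x : Prop)
    · rw [Finset.sum_congr rfl fun A _ => if_congr (and_iff_right hc) rfl rfl,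
        ← Finset.card_filter, if_pos hc]
      exact card_contain4 (ne_of_rel T hc.1) (Ne.symm (ne_of_rel T hc.2.2.1))
        (Ne.symm (ne_of_rel T hc.2.2.2.2.1)) (ne_of_rel T hc.2.1)
        (ne_of_rel T hc.2.2.2.1) hc.2.2.2.2.2
    · rw [if_neg hc]
      exact Finset.sum_eq_zero fun A _ => by rw [if_neg (fun hh => hc hh.1)]
  calc ∑ A ∈ Finset.powersetCard 4 (Finset.univ : Finset (Fin n)), sA T A
      = ∑ A ∈ Finset.powersetCard 4 (Finset.univ : Finset (Fin n)), ∑ u, ∑ v, ∑ w, ∑ x,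
        if (T.rel u v ∧ T.rel v w ∧ T.rel w u ∧ T.rel v x ∧ T.rel x u ∧ w ≠ x)
          ∧ (u ∈ A ∧ v ∈ A ∧ w ∈ A ∧ x ∈ A) then 1 else 0 :=
        Finset.sum_congr rfl fun A _ => expand A
    _ = ∑ u, ∑ v, ∑ w, ∑ x,
        ∑ A ∈ Finset.powersetCard 4 (Finset.univ : Finset (Fin n)),
        (if (T.rel u v ∧ T.rel v w ∧ T.rel w u ∧ T.rel v x ∧ T.rel x u ∧ w ≠ x)
          ∧ (u ∈ A ∧ v ∈ A ∧ w ∈ A ∧ x ∈ A) then 1 else 0) := by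
        rw [Finset.sum_comm]
        refine Finset.sum_congr rfl fun u _ => ?_
        rw [Finset.sum_comm]
        refine Finset.sum_congr rfl fun v _ => ?_
        rw [Finset.sum_comm]
        refine Finset.sum_congr rfl fun w _ => ?_
        rw [Finset.sum_comm]
    _ = ∑ u, ∑ v, ∑ w, ∑ x,
        (if (T.rel u v ∧ T.rel v w ∧ T.rel w u ∧ T.rel v x ∧ T.rel x u ∧ w ≠ x : Prop)
          then 1 else 0) :=
        Finset.sum_congr rfl fun u _ => Finset.sum_congr rfl fun v _ =>
          Finset.sum_congr rfl fun w _ => Finset.sum_congr rfl fun x _ => inner u v w x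
    _ = sqOrd n T.rel := rfl
    _ = SnN T := sqOrd_eq_Sn T

open scoped Classical in
theorem nat_identity (T : Tournament n) :
    3 * copyCount (Tr 4) T + 3 * copyCount R4 T + (n - 3) * TnN T
      = 3 * n.choose 4 + 3 * SnN T := by
  have hcc : ∀ S : Tournament 4, copyCount S T
      = ∑ A ∈ Finset.powersetCard 4 (Finset.univ : Finset (Fin n)),
        if IsoOn S T A then 1 else 0 := fun S => Finset.card_filter _ _
  have hchoose : (3:ℕ) * n.choose 4
      = ∑ _A ∈ Finset.powersetCard 4 (Finset.univ : Finset (Fin n)), 3 := by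
    rw [Finset.sum_const, Finset.card_powersetCard, Finset.card_univ, Fintype.card_fin,
      smul_eq_mul, mul_comm]
  rw [hcc, hcc, ← sum_tA T, ← sum_sA T, hchoose, Finset.mul_sum, Finset.mul_sum,
    Finset.mul_sum, ← Finset.sum_add_distrib, ← Finset.sum_add_distrib,
    ← Finset.sum_add_distrib]
  refine Finset.sum_congr rfl fun A hA => ?_
  have hA4 : A.card = 4 := Finset.mem_powersetCard_univ.mp hA
  have := perA T A hA4
  rw [mul_ite, mul_one, mul_zero, mul_ite, mul_one, mul_zero]
  exact this

end Stmt16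
namespace Stmt16

variable {n : ℕ}

theorem Ccount_le (T : Tournament n) {u v : Fin n} (huv : u ≠ v) :
    Ccount T u v ≤ n - 2 := by
  have hsub : Finset.univ.filter (fun w => T.rel v w ∧ T.rel w u)
      ⊆ (Finset.univ.erase u).erase v := by
    intro w hw
    rw [Finset.mem_filter] at hw
    rw [Finset.mem_erase, Finset.mem_erase]
    exact ⟨Ne.symm (ne_of_rel T hw.2.1), ne_of_rel T hw.2.2, Finset.mem_univ w⟩
  calc Ccount T u v ≤ ((Finset.univ.erase u).erase v).card := Finset.card_le_card hsub
    _ = n - 2 := by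
        rw [Finset.card_erase_of_mem (Finset.mem_erase.mpr ⟨Ne.symm huv, Finset.mem_univ v⟩),
          Finset.card_erase_of_mem (Finset.mem_univ u), Finset.card_univ, Fintype.card_fin]
        omega

theorem castc (c : ℕ) : ((c * (c - 1) : ℕ) : ℝ) = (c:ℝ)^2 - (c:ℝ) := by
  cases c with
  | zero => simp
  | succ k => push_cast [Nat.succ_sub_one]; ring

set_option maxHeartbeats 1600000 in
theorem key_bound (m : ℕ) (hm : 6 ≤ m) (T : Tournament m) :
    |density (Tr 4) T + density R4 T - 3/4|
      ≤ 9 / ((m:ℝ) - 3)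
        + 144 * ((1 / (m:ℝ)^2)
           * ∑ u, ∑ v, if T.rel u v then |(Ccount T u v : ℝ) / ((m:ℝ) - 2) - 1/4| else 0) := by
  have hm6 : (6:ℝ) ≤ (m:ℝ) := by exact_mod_cast hm
  set N : ℝ := (m:ℝ) with hN
  have hN0 : (0:ℝ) < N := by linarith
  have hN2 : (0:ℝ) < N - 2 := by linarith
  have hN3 : (0:ℝ) < N - 3 := by linarith
  set e : ℝ := ∑ u, ∑ v, if T.rel u v then |(Ccount T u v : ℝ) / (N - 2) - 1/4| else 0 with he
  set M : ℝ := ∑ u : Fin m, ∑ v : Fin m, if T.rel u v then (1:ℝ) else 0 with hMdef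
  set Tsum : ℝ := ∑ u, ∑ v, if T.rel u v then (Ccount T u v : ℝ) else 0 with hTdef
  set Qsum : ℝ := ∑ u, ∑ v, if T.rel u v then (Ccount T u v : ℝ)^2 else 0 with hQdef
  set B : ℝ := (m.choose 4 : ℝ) with hBdef
  have he_nonneg : 0 ≤ e := by
    rw [he]
    refine Finset.sum_nonneg fun u _ => Finset.sum_nonneg fun v _ => ?_
    by_cases hr : (T.rel u v : Prop) <;> simp [hr, abs_nonneg]
  have hM_nonneg : 0 ≤ M := by
    rw [hMdef]
    refine Finset.sum_nonneg fun u _ => Finset.sum_nonneg fun v _ => ?_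
    by_cases hr : (T.rel u v : Prop) <;> simp [hr]
  -- 2M = N² - N
  have hM2 : 2 * M = N^2 - N := by
    have hpoint : ∀ u v : Fin m,
        ((if T.rel u v then (1:ℝ) else 0) + (if T.rel v u then (1:ℝ) else 0))
          = if u = v then 0 else 1 := by
      intro u v
      by_cases huv : u = v
      · subst huv; simp [T.irrefl u]
      · rw [T.total u v huv]
        cases hvu : T.rel v u <;> simp [huv]
    calc 2 * M = M + M := by ring
      _ = (∑ u, ∑ v, if T.rel u v then (1:ℝ) else 0)
          + (∑ u, ∑ v, if T.rel v u then (1:ℝ) else 0) := by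
          rw [hMdef]; congr 1; exact Finset.sum_comm
      _ = ∑ u, ∑ v, ((if T.rel u v then (1:ℝ) else 0) + (if T.rel v u then (1:ℝ) else 0)) := by
          rw [← Finset.sum_add_distrib]
          exact Finset.sum_congr rfl fun u _ => Finset.sum_add_distrib.symm
      _ = ∑ u : Fin m, ∑ v, (if u = v then (0:ℝ) else 1) :=
          Finset.sum_congr rfl fun u _ => Finset.sum_congr rfl fun v _ => hpoint u v
      _ = ∑ u : Fin m, (N - 1) := by
          refine Finset.sum_congr rfl fun u _ => ?_
          calc ∑ v, (if u = v then (0:ℝ) else 1)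
              = ∑ v : Fin m, ((1:ℝ) - if u = v then 1 else 0) :=
                Finset.sum_congr rfl fun v _ => by split_ifs <;> ring
            _ = (∑ _v : Fin m, (1:ℝ)) - ∑ v, (if u = v then (1:ℝ) else 0) :=
                Finset.sum_sub_distrib _ _
            _ = N - 1 := by
                rw [Finset.sum_const, Finset.card_univ, Fintype.card_fin,
                  Finset.sum_ite_eq, if_pos (Finset.mem_univ u), nsmul_eq_mul, mul_one]
      _ = N * (N - 1) := by
          rw [Finset.sum_const, Finset.card_univ, Fintype.card_fin, nsmul_eq_mul]
      _ = N^2 - N := by ring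
  -- 24B = N(N-1)(N-2)(N-3)
  have hB24 : 24 * B = N * (N-1) * (N-2) * (N-3) := by
    have h1 : m.descFactorial 4 = 24 * m.choose 4 := by
      rw [Nat.descFactorial_eq_factorial_mul_choose]
      norm_num [Nat.factorial]
    have h2 : m.descFactorial 4 = (m - 3) * ((m - 2) * ((m - 1) * m)) := by
      simp [Nat.descFactorial_succ, Nat.descFactorial_zero]
    have h3 : ((24 * m.choose 4 : ℕ) : ℝ) = (((m - 3) * ((m - 2) * ((m - 1) * m)) : ℕ) : ℝ) := by
      rw [← h1, h2]
    push_cast [Nat.cast_sub (show 3 ≤ m by omega), Nat.cast_sub (show 2 ≤ m by omega),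
      Nat.cast_sub (show 1 ≤ m by omega)] at h3
    rw [hBdef, hN]
    linarith [h3]
  have hBpos : 0 < B := by
    rw [hBdef]
    exact_mod_cast Nat.choose_pos (show 4 ≤ m by omega)
  -- Ccount bounds
  have hCle : ∀ u v : Fin m, T.rel u v → (Ccount T u v : ℝ) ≤ N - 2 := by
    intro u v hr
    have h1 : Ccount T u v ≤ m - 2 := Ccount_le T (ne_of_rel T hr)
    calc (Ccount T u v : ℝ) ≤ ((m - 2 : ℕ) : ℝ) := Nat.cast_le.mpr h1
      _ = N - 2 := by rw [Nat.cast_sub (show 2 ≤ m by omega)]; norm_num [hN]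
  -- |Tsum - (N-2)M/4| ≤ (N-2)e
  have hT : |Tsum - (N-2)*M/4| ≤ (N-2)*e := by
    have hsplit : Tsum - (N-2)*M/4
        = ∑ u, ∑ v, (if T.rel u v then ((Ccount T u v : ℝ) - (N-2)/4) else 0) := by
      have hr1 : (N-2)*M/4 = (N-2)/4 * M := by ring
      rw [hr1, hMdef, hTdef, Finset.mul_sum, ← Finset.sum_sub_distrib]
      refine Finset.sum_congr rfl fun u _ => ?_
      rw [Finset.mul_sum, ← Finset.sum_sub_distrib]
      refine Finset.sum_congr rfl fun v _ => ?_
      split_ifs <;> ring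
    rw [hsplit]
    have htarget : (N-2)*e = ∑ u, ∑ v,
        (if T.rel u v then (N-2) * |(Ccount T u v : ℝ)/(N-2) - 1/4| else 0) := by
      rw [he, Finset.mul_sum]
      refine Finset.sum_congr rfl fun u _ => ?_
      rw [Finset.mul_sum]
      refine Finset.sum_congr rfl fun v _ => ?_
      split_ifs <;> ring
    rw [htarget]
    refine le_trans (Finset.abs_sum_le_sum_abs _ _) (Finset.sum_le_sum fun u _ =>
      le_trans (Finset.abs_sum_le_sum_abs _ _) (Finset.sum_le_sum fun v _ => ?_))
    by_cases hr : (T.rel u v : Prop)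
    · simp only [hr, if_true]
      have hx : (Ccount T u v : ℝ) - (N-2)/4 = (N-2) * ((Ccount T u v : ℝ)/(N-2) - 1/4) := by
        field_simp
      rw [hx, abs_mul, abs_of_pos hN2]
    · simp [hr]
  -- |Qsum - (N-2)²M/16| ≤ 2(N-2)²e
  have hQ : |Qsum - (N-2)^2*M/16| ≤ 2*(N-2)^2*e := by
    have hsplit : Qsum - (N-2)^2*M/16
        = ∑ u, ∑ v, (if T.rel u v then ((Ccount T u v : ℝ)^2 - (N-2)^2/16) else 0) := by
      have hr1 : (N-2)^2*M/16 = (N-2)^2/16 * M := by ring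
      rw [hr1, hMdef, hQdef, Finset.mul_sum, ← Finset.sum_sub_distrib]
      refine Finset.sum_congr rfl fun u _ => ?_
      rw [Finset.mul_sum, ← Finset.sum_sub_distrib]
      refine Finset.sum_congr rfl fun v _ => ?_
      split_ifs <;> ring
    have htarget : 2*(N-2)^2*e = ∑ u, ∑ v,
        (if T.rel u v then 2*(N-2)^2 * |(Ccount T u v : ℝ)/(N-2) - 1/4| else 0) := by
      rw [he, Finset.mul_sum]
      refine Finset.sum_congr rfl fun u _ => ?_
      rw [Finset.mul_sum]
      refine Finset.sum_congr rfl fun v _ => ?_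
      split_ifs <;> ring
    rw [hsplit, htarget]
    refine le_trans (Finset.abs_sum_le_sum_abs _ _) (Finset.sum_le_sum fun u _ =>
      le_trans (Finset.abs_sum_le_sum_abs _ _) (Finset.sum_le_sum fun v _ => ?_))
    by_cases hr : (T.rel u v : Prop)
    · simp only [hr, if_true]
      have hfac : (Ccount T u v : ℝ)^2 - (N-2)^2/16
          = ((Ccount T u v : ℝ) - (N-2)/4) * ((Ccount T u v : ℝ) + (N-2)/4) := by ring
      have hx : (Ccount T u v : ℝ) - (N-2)/4 = (N-2) * ((Ccount T u v : ℝ)/(N-2) - 1/4) := by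
        field_simp
      have hCpos : (0:ℝ) ≤ (Ccount T u v : ℝ) := Nat.cast_nonneg _
      have hCub : (Ccount T u v : ℝ) ≤ N - 2 := hCle u v hr
      calc |(Ccount T u v : ℝ)^2 - (N-2)^2/16|
          = |(Ccount T u v : ℝ) - (N-2)/4| * |(Ccount T u v : ℝ) + (N-2)/4| := by
            rw [hfac, abs_mul]
        _ ≤ |(Ccount T u v : ℝ) - (N-2)/4| * (2*(N-2)) := by
            refine mul_le_mul_of_nonneg_left ?_ (abs_nonneg _)
            rw [abs_of_nonneg (by linarith)]
            linarith
        _ = (N-2) * |(Ccount T u v : ℝ)/(N-2) - 1/4| * (2*(N-2)) := by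
            rw [hx, abs_mul, abs_of_pos hN2]
        _ = 2*(N-2)^2 * |(Ccount T u v : ℝ)/(N-2) - 1/4| := by ring
    · simp [hr]
  -- cast identity
  have hTn : ((TnN T : ℕ) : ℝ) = Tsum := by
    rw [TnN, hTdef, Nat.cast_sum]
    refine Finset.sum_congr rfl fun u _ => ?_
    rw [Nat.cast_sum]
    refine Finset.sum_congr rfl fun v _ => ?_
    split_ifs <;> simp
  have hSn : ((SnN T : ℕ) : ℝ) = Qsum - Tsum := by
    have step : ((SnN T : ℕ) : ℝ)
        = ∑ u, ∑ v, (if T.rel u v then ((Ccount T u v : ℝ)^2 - (Ccount T u v : ℝ)) else 0) := by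
      rw [SnN, Nat.cast_sum]
      refine Finset.sum_congr rfl fun u _ => ?_
      rw [Nat.cast_sum]
      refine Finset.sum_congr rfl fun v _ => ?_
      split_ifs
      · exact castc _
      · simp
    rw [step, hQdef, hTdef, ← Finset.sum_sub_distrib]
    refine Finset.sum_congr rfl fun u _ => ?_
    rw [← Finset.sum_sub_distrib]
    refine Finset.sum_congr rfl fun v _ => ?_
    split_ifs <;> ring
  have hId : 3*(copyCount (Tr 4) T : ℝ) + 3*(copyCount R4 T : ℝ) + (N-3)*Tsum
      = 3*B + 3*(Qsum - Tsum) := by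
    have hnat := nat_identity T
    have hcast : ((3 * copyCount (Tr 4) T + 3 * copyCount R4 T + (m-3) * TnN T : ℕ) : ℝ)
        = ((3 * m.choose 4 + 3 * SnN T : ℕ) : ℝ) := by exact_mod_cast congrArg Nat.cast hnat
    push_cast [Nat.cast_sub (show 3 ≤ m by omega)] at hcast
    rw [hTn, hSn] at hcast
    rw [hBdef]
    linarith [hcast]
  -- express p - 3/4
  have hply : density (Tr 4) T + density R4 T - 3/4
      = (3/4*B + 3*Qsum - N*Tsum) / (3*B) := by
    have hnum : 3/4*B + 3*Qsum - N*Tsum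
        = 3*(copyCount (Tr 4) T : ℝ) + 3*(copyCount R4 T : ℝ) - 9/4*B := by
      linarith [hId]
    rw [hnum, density, density, ← hBdef]
    field_simp
    ring
  set NN : ℝ := 3/4*B + 3*Qsum - N*Tsum with hNNdef
  have hNNb : |NN| ≤ 9*M*(N-2)/16 + 9*(N-2)^2*e := by
    have hdet : 3/4*B + 3*((N-2)^2*M/16) - N*((N-2)*M/4) = -(9*M*(N-2)/16) := by
      linear_combination (1/32) * hB24 - ((N-2)*(N-3)/32) * hM2
    have hdecomp : NN = -(9*M*(N-2)/16)
        + (3*(Qsum - (N-2)^2*M/16) - N*(Tsum - (N-2)*M/4)) := by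
      rw [hNNdef]; linear_combination hdet
    rw [hdecomp]
    have h1 : |(-(9*M*(N-2)/16))| = 9*M*(N-2)/16 := by
      rw [abs_neg, abs_of_nonneg]
      positivity
    have h2 : |3*(Qsum - (N-2)^2*M/16) - N*(Tsum - (N-2)*M/4)|
        ≤ 3*(2*(N-2)^2*e) + N*((N-2)*e) := by
      have := abs_sub (3*(Qsum - (N-2)^2*M/16)) (N*(Tsum - (N-2)*M/4))
      calc |3*(Qsum - (N-2)^2*M/16) - N*(Tsum - (N-2)*M/4)|
          ≤ |3*(Qsum - (N-2)^2*M/16)| + |N*(Tsum - (N-2)*M/4)| := abs_sub _ _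
        _ = 3*|Qsum - (N-2)^2*M/16| + N*|Tsum - (N-2)*M/4| := by
            rw [abs_mul, abs_mul, abs_of_nonneg (by norm_num : (0:ℝ) ≤ 3),
              abs_of_pos hN0]
        _ ≤ 3*(2*(N-2)^2*e) + N*((N-2)*e) := by
            refine add_le_add (mul_le_mul_of_nonneg_left hQ (by norm_num))
              (mul_le_mul_of_nonneg_left hT (by linarith))
    have hextra : N*((N-2)*e) ≤ 3*(N-2)^2*e := by
      have h0 : 0 ≤ (N-2)*((2*N-6)*e) :=
        mul_nonneg (by linarith) (mul_nonneg (by linarith) he_nonneg)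
      have h1 : 3*(N-2)^2*e - N*((N-2)*e) = (N-2)*((2*N-6)*e) := by ring
      linarith
    calc |(-(9*M*(N-2)/16)) + (3*(Qsum - (N-2)^2*M/16) - N*(Tsum - (N-2)*M/4))|
        ≤ |(-(9*M*(N-2)/16))| + |3*(Qsum - (N-2)^2*M/16) - N*(Tsum - (N-2)*M/4)| :=
          abs_add_le _ _
      _ ≤ 9*M*(N-2)/16 + (3*(2*(N-2)^2*e) + N*((N-2)*e)) := by
          rw [h1]; exact add_le_add_right h2 _
      _ ≤ 9*M*(N-2)/16 + 9*(N-2)^2*e := by linarith [hextra]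
  have h3B : (0:ℝ) < 3*B := by linarith
  have habs : |density (Tr 4) T + density R4 T - 3/4| = |NN| / (3*B) := by
    rw [hply, abs_div, abs_of_pos h3B]
  rw [habs, div_le_iff₀ h3B]
  refine le_trans hNNb ?_
  have hMv : M = (N^2 - N)/2 := by linarith
  have hBv : B = N*(N-1)*(N-2)*(N-3)/24 := by linarith
  have hx1 : 9*M*(N-2)/16 ≤ 9/(N-3)*(3*B) := by
    have hr : 9/(N-3)*(3*B) = 27*B/(N-3) := by ring
    rw [hr, le_div_iff₀ hN3, hMv, hBv]
    linarith [mul_nonneg (mul_nonneg (mul_nonneg hN0.le (by linarith : (0:ℝ) ≤ N-1))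
      hN2.le) hN3.le]
  have hx2 : 9*(N-2)^2*e ≤ (144*((1/N^2)*e))*(3*B) := by
    have hNsq : (0:ℝ) < N^2 := by positivity
    have hq : N*(N-2) ≤ 2*((N-1)*(N-3)) := by
      linarith [mul_nonneg (by linarith : (0:ℝ) ≤ N) (by linarith : (0:ℝ) ≤ N - 6)]
    have hkey : 9*(N-2)^2 ≤ 432*B/N^2 := by
      rw [le_div_iff₀ hNsq, hBv]
      linarith [mul_le_mul_of_nonneg_left hq
        (show (0:ℝ) ≤ 9*(N*(N-2)) by linarith [mul_pos hN0 hN2])]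
    have hr : (144*((1/N^2)*e))*(3*B) = (432*B/N^2)*e := by field_simp; ring
    rw [hr]
    exact mul_le_mul_of_nonneg_right hkey he_nonneg
  have hexp : (9/(N-3) + 144*((1/N^2)*e))*(3*B)
      = 9/(N-3)*(3*B) + (144*((1/N^2)*e))*(3*B) := by ring
  rw [hexp]
  linarith [hx1, hx2]

end Stmt16

/-- if `(1/n_j²) · Σ_{arcs (u,v)} |C(u,v)/(n_j-2) - 1/4| → 0`, then
`p(Tr₄, T_j) + p(R₄, T_j) → 3/4`. -/
theorem tr4_plus_r4_of_C_concentration (nn : ℕ → ℕ) (T : ∀ j, Tournament (nn j))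
    (hn : Filter.Tendsto nn Filter.atTop Filter.atTop)
    (h : Filter.Tendsto (fun j => (1 / (nn j : ℝ) ^ 2) * ∑ u, ∑ v, if (T j).rel u v then |(Ccount (T j) u v : ℝ) / ((nn j : ℝ) - 2) - 1 / 4| else 0)
      Filter.atTop (nhds 0)) :
    Filter.Tendsto (fun j => density (Tr 4) (T j) + density R4 (T j))
      Filter.atTop (nhds (3 / 4)) := by
  set p : ℕ → ℝ := fun j => density (Tr 4) (T j) + density R4 (T j) with hp
  set bnd : ℕ → ℝ := fun j => 9 / ((nn j : ℝ) - 3)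
    + 144 * ((1 / (nn j : ℝ) ^ 2) * ∑ u, ∑ v, if (T j).rel u v then
        |(Ccount (T j) u v : ℝ) / ((nn j : ℝ) - 2) - 1 / 4| else 0) with hbnd
  have hev : ∀ᶠ j in Filter.atTop, ‖p j - 3/4‖ ≤ bnd j := by
    filter_upwards [hn.eventually (Filter.eventually_ge_atTop 6)] with j hj
    rw [Real.norm_eq_abs]
    exact Stmt16.key_bound (nn j) hj (T j)
  have hb0 : Filter.Tendsto bnd Filter.atTop (nhds 0) := by
    have h1 : Filter.Tendsto (fun j => ((nn j : ℝ) - 3)) Filter.atTop Filter.atTop := by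
      have : Filter.Tendsto (fun j => ((nn j : ℝ))) Filter.atTop Filter.atTop :=
        tendsto_natCast_atTop_atTop.comp hn
      simpa [sub_eq_add_neg] using Filter.tendsto_atTop_add_const_right _ (-3 : ℝ) this
    have h2 : Filter.Tendsto (fun j => 9 / ((nn j : ℝ) - 3)) Filter.atTop (nhds 0) :=
      Filter.Tendsto.div_atTop tendsto_const_nhds h1
    have h3 := h.const_mul (144 : ℝ)
    rw [mul_zero] at h3
    have := h2.add h3
    rw [add_zero] at this
    exact this
  have hzero : Filter.Tendsto (fun j => p j - 3/4) Filter.atTop (nhds 0) :=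
    squeeze_zero_norm' hev hb0
  have := hzero.add_const (3/4 : ℝ)
  rw [zero_add] at this
  simpa using this
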